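/- Let f, g ∈ F₂[X] be coprime polynomials with hat-polynomials f̂ = Σ aᵢ X^{2^i}, ĝ similarly (where f = Σ aᵢ X^i). Then F₂[X]/(f̂ ∘ ĝ) is isomorphic as an F₂-algebra to F₂[Y,Z]/(f̂(Y), ĝ(Z)). -/

import Mathlib

open Polynomial

/-- The hat-polynomial (linearized polynomial) of `f = Σ aᵢ Xⁱ` is `f̂ = Σ aᵢ X^(2^i)`. -/
noncomputable def hat (f : (ZMod 2)[X]) : (ZMod 2)[X] :=
  f.sum fun i a => C a * X ^ 2 ^ i

lemma hat_monomial (n : ℕ) (a : ZMod 2) : hat (monomial n a) = C a * X ^ 2 ^ n := by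
  unfold hat
  rw [Polynomial.sum_monomial_index]
  simp

lemma hat_add (p q : (ZMod 2)[X]) : hat (p + q) = hat p + hat q := by
  unfold hat
  apply Polynomial.sum_add_index <;> intros <;> simp [add_mul]

lemma hat_one : hat 1 = X := by
  have := hat_monomial 0 1
  simpa using this

lemma zmod2_sq (a : ZMod 2) : a ^ 2 = a := by
  have h : ∀ b : ZMod 2, b ^ 2 = b := by decide
  exact h a

lemma zmod2_pow (a : ZMod 2) (n : ℕ) : a ^ 2 ^ n = a := by
  induction n with
  | zero => simp
  | succ n ih => rw [pow_succ, pow_mul, ih, zmod2_sq]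

lemma two_eq_zero' {A : Type*} [CommRing A] [Algebra (ZMod 2) A] : (2 : A) = 0 := by
  have : (2 : A) = algebraMap (ZMod 2) A 2 := by
    rw [map_ofNat]
  rw [this]
  have h2 : (2 : ZMod 2) = 0 := by decide
  rw [h2, map_zero]

lemma addSq2 {A : Type*} [CommRing A] [Algebra (ZMod 2) A] (x y : A) :
    (x + y) ^ 2 = x ^ 2 + y ^ 2 := by
  have h2 : (2 : A) = 0 := two_eq_zero'
  rw [add_sq, h2]; ring

lemma add_pow_two_pow {A : Type*} [CommRing A] [Algebra (ZMod 2) A] (x y : A) (n : ℕ) :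
    (x + y) ^ 2 ^ n = x ^ 2 ^ n + y ^ 2 ^ n := by
  induction n with
  | zero => simp
  | succ n ih => rw [pow_succ, pow_mul, pow_mul, pow_mul, ih, addSq2]

lemma hat_comp_add (n : ℕ) (a : ZMod 2) (r s : (ZMod 2)[X]) :
    (C a * X ^ 2 ^ n).comp (r + s) = (C a * X ^ 2 ^ n).comp r + (C a * X ^ 2 ^ n).comp s := by
  simp [mul_comp, pow_comp, add_pow_two_pow, mul_add]

lemma hat_comp_mul (p q : (ZMod 2)[X]) : hat (p * q) = (hat p).comp (hat q) := by
  induction p using Polynomial.induction_on' with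
  | add p1 p2 h1 h2 => rw [add_mul, hat_add, h1, h2, hat_add, add_comp]
  | monomial n a =>
    induction q using Polynomial.induction_on' with
    | add q1 q2 h1 h2 =>
      rw [mul_add, hat_add, h1, h2, hat_add, hat_monomial]
      exact (hat_comp_add n a _ _).symm
    | monomial m b =>
      rw [monomial_mul_monomial, hat_monomial, hat_monomial, hat_monomial]
      simp only [mul_comp, C_comp, pow_comp, X_comp, mul_pow, ← C_pow, zmod2_pow, ← pow_mul,
        C_mul]
      rw [← pow_add]
      ring_nf

lemma aeval_hat_add {A : Type*} [CommRing A] [Algebra (ZMod 2) A] (p : (ZMod 2)[X]) (x y : A) :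
    aeval (x + y) (hat p) = aeval x (hat p) + aeval y (hat p) := by
  induction p using Polynomial.induction_on' with
  | add p1 p2 h1 h2 => rw [hat_add]; simp only [map_add, h1, h2]; ring
  | monomial n a => simp [hat_monomial, add_pow_two_pow, mul_add]

lemma aeval_hat_zero {A : Type*} [CommRing A] [Algebra (ZMod 2) A] (p : (ZMod 2)[X]) :
    aeval (0 : A) (hat p) = 0 := by
  induction p using Polynomial.induction_on' with
  | add p1 p2 h1 h2 => rw [hat_add]; simp [h1, h2]
  | monomial n a => simp [hat_monomial, zero_pow, (Nat.two_pow_pos n).ne']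

lemma algHom_aeval_hat_mul {A B : Type*} [CommRing A] [CommRing B] [Algebra (ZMod 2) A]
    [Algebra (ZMod 2) B] (φ : A →ₐ[ZMod 2] B) (p q : (ZMod 2)[X]) (w : A) :
    φ (aeval w (hat (p * q))) = aeval (φ (aeval w (hat q))) (hat p) := by
  simp [hat_comp_mul, Polynomial.aeval_comp, Polynomial.aeval_algHom_apply]

theorem stmt_15 (f g : (ZMod 2)[X]) (hfg : IsCoprime f g) :
    Nonempty (((ZMod 2)[X] ⧸ Ideal.span {(hat f).comp (hat g)}) ≃ₐ[ZMod 2]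
      (MvPolynomial (Fin 2) (ZMod 2) ⧸
        Ideal.span ({Polynomial.aeval (MvPolynomial.X 0) (hat f),
                     Polynomial.aeval (MvPolynomial.X 1) (hat g)} :
          Set (MvPolynomial (Fin 2) (ZMod 2))))) := by
  obtain ⟨a, b, hab⟩ := hfg
  have h2X : (2 : (ZMod 2)[X]) = 0 := two_eq_zero'
  set S := MvPolynomial (Fin 2) (ZMod 2) with hS
  set Y : S := MvPolynomial.X 0 with hY
  set Z : S := MvPolynomial.X 1 with hZ
  set I : Ideal S :=
    Ideal.span {Polynomial.aeval Y (hat f), Polynomial.aeval Z (hat g)} with hIdef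
  set J : Ideal (ZMod 2)[X] := Ideal.span {(hat f).comp (hat g)} with hJdef
  set mkI : S →ₐ[ZMod 2] S ⧸ I := Ideal.Quotient.mkₐ (ZMod 2) I with hmkI
  set mkJ : (ZMod 2)[X] →ₐ[ZMod 2] (ZMod 2)[X] ⧸ J := Ideal.Quotient.mkₐ (ZMod 2) J with hmkJdef
  have hmkIf : mkI (Polynomial.aeval Y (hat f)) = 0 :=
    Ideal.Quotient.eq_zero_iff_mem.mpr (Ideal.subset_span (Set.mem_insert _ _))
  have hmkIg : mkI (Polynomial.aeval Z (hat g)) = 0 :=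
    Ideal.Quotient.eq_zero_iff_mem.mpr (Ideal.subset_span (Set.mem_insert_of_mem _ rfl))
  have hmkJ : mkJ ((hat f).comp (hat g)) = 0 :=
    Ideal.Quotient.eq_zero_iff_mem.mpr (Ideal.subset_span rfl)
  set t1 : S := Polynomial.aeval Y (hat b) with ht1
  set t2 : S := Polynomial.aeval Z (hat a) with ht2
  set u : S ⧸ I := mkI t1 + mkI t2 with hu
  set Φ0 : (ZMod 2)[X] →ₐ[ZMod 2] S ⧸ I := Polynomial.aeval u with hΦ0
  -- evaluation of hat polynomials at the images of t1, t2
  have e1 : ∀ p : (ZMod 2)[X], aeval (mkI t1) (hat p) = mkI (Polynomial.aeval Y (hat (p * b))) :=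
    fun p => (algHom_aeval_hat_mul mkI p b Y).symm
  have e2 : ∀ p : (ZMod 2)[X], aeval (mkI t2) (hat p) = mkI (Polynomial.aeval Z (hat (p * a))) :=
    fun p => (algHom_aeval_hat_mul mkI p a Z).symm
  have k1 : ∀ p : (ZMod 2)[X], mkI (Polynomial.aeval Y (hat (p * f))) = 0 := fun p => by
    rw [algHom_aeval_hat_mul mkI p f Y, hmkIf, aeval_hat_zero]
  have k2 : ∀ p : (ZMod 2)[X], mkI (Polynomial.aeval Z (hat (p * g))) = 0 := fun p => by
    rw [algHom_aeval_hat_mul mkI p g Z, hmkIg, aeval_hat_zero]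
  have hΦhat : ∀ r : (ZMod 2)[X],
      Φ0 (hat r) = mkI (Polynomial.aeval Y (hat (r * b))) + mkI (Polynomial.aeval Z (hat (r * a))) := by
    intro r
    show aeval u (hat r) = _
    rw [hu, aeval_hat_add, e1, e2]
  have hΦker : ∀ r ∈ J, Φ0 r = 0 := by
    intro r hr
    rw [hJdef, Ideal.mem_span_singleton] at hr
    obtain ⟨s, rfl⟩ := hr
    rw [map_mul]
    have hz : Φ0 ((hat f).comp (hat g)) = 0 := by
      rw [← hat_comp_mul, hΦhat]
      have h1 : f * g * b = g * b * f := by ring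
      have h2 : f * g * a = f * a * g := by ring
      rw [h1, h2, k1, k2, add_zero]
    rw [hz, zero_mul]
  set v : Fin 2 → (ZMod 2)[X] ⧸ J := ![mkJ (hat g), mkJ (hat f)] with hv
  set Ψ0 : S →ₐ[ZMod 2] (ZMod 2)[X] ⧸ J := MvPolynomial.aeval v with hΨ0
  have hΨY : Ψ0 Y = mkJ (hat g) := by
    rw [hΨ0, hY, MvPolynomial.aeval_X, hv]; simp
  have hΨZ : Ψ0 Z = mkJ (hat f) := by
    rw [hΨ0, hZ, MvPolynomial.aeval_X, hv]; simp
  -- Ψ0 applied to aeval W (hat p)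
  have eΨ : ∀ (p q : (ZMod 2)[X]) (W : S), Ψ0 W = mkJ (hat q) →
      Ψ0 (Polynomial.aeval W (hat p)) = mkJ (hat (p * q)) := by
    intro p q W hW
    rw [← Polynomial.aeval_algHom_apply, hW, ← Polynomial.aeval_X_left_apply (hat q),
      ← algHom_aeval_hat_mul mkJ p q X, Polynomial.aeval_X_left_apply]
  have hΨkerf : Ψ0 (Polynomial.aeval Y (hat f)) = 0 := by
    rw [eΨ f g Y hΨY, hat_comp_mul, hmkJ]
  have hΨkerg : Ψ0 (Polynomial.aeval Z (hat g)) = 0 := by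
    rw [eΨ g f Z hΨZ, mul_comm g f, hat_comp_mul, hmkJ]
  have hΨker : ∀ s ∈ I, Ψ0 s = 0 := by
    intro s hs
    have hle : I ≤ RingHom.ker Ψ0.toRingHom := by
      rw [hIdef, Ideal.span_le]
      rintro x hx
      simp only [Set.mem_insert_iff, Set.mem_singleton_iff] at hx
      rcases hx with rfl | rfl
      · exact hΨkerf
      · exact hΨkerg
    exact hle hs
  set Φ : ((ZMod 2)[X] ⧸ J) →ₐ[ZMod 2] S ⧸ I := Ideal.Quotient.liftₐ J Φ0 hΦker with hΦ
  set Ψ : (S ⧸ I) →ₐ[ZMod 2] (ZMod 2)[X] ⧸ J := Ideal.Quotient.liftₐ I Ψ0 hΨker with hΨ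
  have hΦmk : ∀ r : (ZMod 2)[X], Φ (mkJ r) = Φ0 r := fun r => by
    rw [hΦ, hmkJdef]
    simp [Ideal.Quotient.liftₐ_apply, Ideal.Quotient.mkₐ_eq_mk, Ideal.Quotient.lift_mk]
    rfl
  have hΨmk : ∀ s : S, Ψ (mkI s) = Ψ0 s := fun s => by
    rw [hΨ, hmkI]
    simp [Ideal.Quotient.liftₐ_apply, Ideal.Quotient.mkₐ_eq_mk, Ideal.Quotient.lift_mk]
    rfl
  have hgb : g * b = 1 + a * f := by linear_combination hab - a * f * h2X
  have hfa : f * a = 1 + b * g := by linear_combination hab - b * g * h2X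
  refine ⟨AlgEquiv.ofAlgHom Φ Ψ ?_ ?_⟩
  · apply Ideal.Quotient.algHom_ext
    apply MvPolynomial.algHom_ext
    intro i
    fin_cases i
    · show Φ (Ψ (mkI Y)) = mkI Y
      rw [hΨmk, hΨY, hΦmk, hΦhat, hgb, mul_comm g a, k2, add_zero, hat_add, hat_one, map_add,
        Polynomial.aeval_X, map_add, k1, add_zero]
    · show Φ (Ψ (mkI Z)) = mkI Z
      rw [hΨmk, hΨZ, hΦmk, hΦhat, mul_comm f b, k1, zero_add, hfa, hat_add, hat_one, map_add,
        Polynomial.aeval_X, map_add, k2, add_zero]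
  · apply Ideal.Quotient.algHom_ext
    apply Polynomial.algHom_ext
    show Ψ (Φ (mkJ X)) = mkJ X
    have hX : Φ0 X = u := by rw [hΦ0]; exact Polynomial.aeval_X u
    rw [hΦmk, hX, hu, map_add, hΨmk, hΨmk, ht1, ht2, eΨ b g Y hΨY, eΨ a f Z hΨZ,
      ← map_add, ← hat_add]
    have h1 : b * g + a * f = 1 := by rw [add_comm]; exact hab
    rw [h1, hat_one]
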